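/- arXiv:2410.01161 — 2 statements merged into one kernel-verified Lean document; each statement's English description precedes it below -/
import Mathlib

section
/- Let 𝒜 and ℬ_1, …, ℬ_m be real N×N matrices, let u_1, …, u_m : ℝ → ℝ be continuous control signals, and let α(a) = ᾱ + α̲·a and β(b) = β̄ + β̲·b for fixed reals ᾱ, α̲, β̄, β̲. Suppose X : ℝ × [−1,1] × [−1,1] → ℝ^N is continuous, its time derivative ∂X/∂t exists and is jointly continuous, and for every t and every (a,b) ∈ [−1,1]² it satisfies ∂X/∂t(t,a,b) = α(a)·𝒜·X(t,a,b) + β(b)·(Σ_{j=1}^m u_j(t)·ℬ_j)·X(t,a,b). For natural numbers p, q define the Legendre coefficients x_{p,q}(t) = ∫_{−1}^1 ∫_{−1}^1 X(t,a,b) L_p(a) L_q(b) da db, where L_n is the normalized Legendre polynomial. Then each x_{p,q} is differentiable in t and satisfies the exact moment dynamics d x_{p,q}/dt = 𝒜·( ᾱ·x_{p,q} + α̲·(c_{p−1}·x_{p−1,q} + c_p·x_{p+1,q}) ) + (Σ_{j=1}^m u_j(t)·ℬ_j)·( β̄·x_{p,q} + β̲·(c_{q−1}·x_{p,q−1} +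 c_q·x_{p,q+1}) ), where c_n = (n+1)/√((2n+3)(2n+1)) and the terms with index −1 are absent (interpreted as zero) when p = 0 or q = 0. -/
open Matrix

/-- The Legendre polynomial by Rodrigues' formula. -/
noncomputable def legendreP (n : ℕ) (x : ℝ) : ℝ :=
  (1 / (2 ^ n * (n.factorial : ℝ))) * iteratedDeriv n (fun y : ℝ => (y ^ 2 - 1) ^ n) x

/-- The normalized Legendre polynomial `L_n = √((2n+1)/2) · P_n`. -/
noncomputable def legendreL (n : ℕ) (x : ℝ) : ℝ :=
  Real.sqrt ((2 * n + 1) / 2) * legendreP n x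

/-- The recurrence coefficient `c_n = (n+1)/√((2n+3)(2n+1))`. -/
noncomputable def legendreC (n : ℕ) : ℝ :=
  ((n : ℝ) + 1) / Real.sqrt ((2 * n + 3) * (2 * n + 1))

open Polynomial MeasureTheory

noncomputable def fpol (n : ℕ) : ℝ[X] := (X ^ 2 - 1) ^ n

lemma iteratedDeriv_polyeval (p : ℝ[X]) (n : ℕ) :
    iteratedDeriv n (fun y : ℝ => p.eval y) = fun x => (derivative^[n] p).eval x := by
  induction n generalizing p with
  | zero => simp
  | succ k ih =>
    rw [iteratedDeriv_succ', Function.iterate_succ_apply]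
    have : deriv (fun y : ℝ => p.eval y) = fun y => (derivative p).eval y := by
      funext y; exact Polynomial.deriv (𝕜 := ℝ) (p := p)
    rw [this, ih]

lemma legendreP_eq (n : ℕ) (x : ℝ) :
    legendreP n x = (1 / (2 ^ n * (n.factorial : ℝ))) * (derivative^[n] (fpol n)).eval x := by
  have : (fun y : ℝ => (y ^ 2 - 1) ^ n) = fun y : ℝ => (fpol n).eval y := by
    funext y; simp [fpol]
  rw [legendreP, this, iteratedDeriv_polyeval]

lemma legendreP_continuous (n : ℕ) : Continuous (legendreP n) := by
  have : legendreP n = fun x => (1 / (2 ^ n * (n.factorial : ℝ))) * (derivative^[n] (fpol n)).eval x := by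
    funext x; exact legendreP_eq n x
  rw [this]
  exact continuous_const.mul (Polynomial.continuous _)

lemma legendreL_continuous (n : ℕ) : Continuous (legendreL n) :=
  continuous_const.mul (legendreP_continuous n)

lemma itd_add (n : ℕ) (p q : ℝ[X]) :
    derivative^[n] (p + q) = derivative^[n] p + derivative^[n] q := by
  induction n generalizing p q with
  | zero => simp
  | succ k ih => rw [Function.iterate_succ_apply, derivative_add, ih,
      Function.iterate_succ_apply, Function.iterate_succ_apply]

lemma iter_deriv_X_mul (m : ℕ) (g : ℝ[X]) :
    derivative^[m + 1] (X * g) =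
      X * derivative^[m + 1] g + C ((m : ℝ) + 1) * derivative^[m] g := by
  induction m generalizing g with
  | zero =>
    simp only [Function.iterate_one, derivative_mul, derivative_X, one_mul, Nat.cast_zero,
      Function.iterate_zero, id_eq, C_1, zero_add, one_mul]
    ring
  | succ k ih =>
    rw [Function.iterate_succ_apply, derivative_mul, derivative_X, one_mul, itd_add,
      ih (derivative g)]
    have h1 : derivative^[k] (derivative g) = derivative^[k + 1] g :=
      (Function.iterate_succ_apply derivative k g).symm
    have h2 : derivative^[k + 1] (derivative g) = derivative^[k + 2] g :=
      (Function.iterate_succ_apply derivative (k + 1) g).symm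
    rw [h1, h2]
    push_cast
    simp only [C_add, C_1]
    ring

lemma iter_deriv_X_mul' (m : ℕ) (g : ℝ[X]) :
    derivative^[m] (X * g) =
      X * derivative^[m] g + C (m : ℝ) * derivative^[m - 1] g := by
  cases m with
  | zero => simp
  | succ k =>
    have := iter_deriv_X_mul k g
    simpa [C_add, C_1] using this

lemma iter_deriv_sq_mul (m : ℕ) (g : ℝ[X]) :
    derivative^[m + 2] ((X ^ 2 - 1) * g) =
      (X ^ 2 - 1) * derivative^[m + 2] g
        + C (2 * ((m : ℝ) + 2)) * (X * derivative^[m + 1] g)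
        + C (((m : ℝ) + 2) * ((m : ℝ) + 1)) * derivative^[m] g := by
  have hd : ∀ g : ℝ[X], derivative ((X ^ 2 - 1) * g) =
      C 2 * (X * g) + (X ^ 2 - 1) * derivative g := by
    intro g
    simp only [derivative_mul, derivative_sub, derivative_one, derivative_pow, derivative_X,
      pow_one, mul_one, sub_zero, Nat.cast_ofNat, map_ofNat]
    ring
  induction m generalizing g with
  | zero =>
    have e1 : derivative^[(2:ℕ)] ((X ^ 2 - 1) * g) =
        derivative (derivative ((X ^ 2 - 1) * g)) := by
      rw [Function.iterate_succ_apply, Function.iterate_one]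
    rw [e1, hd g, derivative_add, derivative_mul, derivative_mul, derivative_X,
      hd (derivative g)]
    have h2 : derivative (derivative g) = derivative^[(0:ℕ)+2] g := rfl
    have h1 : derivative g = derivative^[(0:ℕ)+1] g := rfl
    rw [h2]
    simp only [h1]
    simp only [Nat.cast_zero, zero_add]
    norm_num [derivative_ofNat, map_ofNat]
    ring
  | succ k ih =>
    rw [Function.iterate_succ_apply, hd g, itd_add]
    have hCmul : derivative^[k+2] (C 2 * (X * g)) = C 2 * derivative^[k+2] (X * g) := by
      rw [iterate_derivative_C_mul]
    rw [hCmul, iter_deriv_X_mul (k + 1) g, ih (derivative g)]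
    have h1 : derivative^[k] (derivative g) = derivative^[k + 1] g :=
      (Function.iterate_succ_apply derivative k g).symm
    have h2 : derivative^[k + 1] (derivative g) = derivative^[k + 2] g :=
      (Function.iterate_succ_apply derivative (k + 1) g).symm
    have h3 : derivative^[k + 2] (derivative g) = derivative^[k + 3] g :=
      (Function.iterate_succ_apply derivative (k + 2) g).symm
    rw [h1, h2, h3]
    push_cast
    simp only [C_add, C_1, C_mul, map_ofNat]
    ring

lemma identityA (k : ℕ) :
    (X ^ 2 - 1) * derivative^[k + 2] (fpol (k + 1)) =
      C (((k : ℝ) + 1) * ((k : ℝ) + 2)) * derivative^[k] (fpol (k + 1)) := by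
  have hf : fpol (k + 2) = (X ^ 2 - 1) * fpol (k + 1) := by
    rw [fpol, fpol, pow_succ]; ring
  have h1 : derivative^[k + 2] (fpol (k + 2)) =
      (X ^ 2 - 1) * derivative^[k + 2] (fpol (k + 1))
        + C (2 * ((k : ℝ) + 2)) * (X * derivative^[k + 1] (fpol (k + 1)))
        + C (((k : ℝ) + 2) * ((k : ℝ) + 1)) * derivative^[k] (fpol (k + 1)) := by
    rw [hf]; exact iter_deriv_sq_mul k (fpol (k + 1))
  have hderiv : derivative (fpol (k + 2)) = C (2 * ((k : ℝ) + 2)) * (X * fpol (k + 1)) := by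
    rw [fpol, derivative_pow]
    simp only [derivative_sub, derivative_one, derivative_pow, derivative_X, pow_one, mul_one,
      sub_zero, Nat.cast_ofNat, map_ofNat]
    push_cast
    simp only [C_add, C_mul, C_1, map_ofNat, fpol]
    ring
  have h2 : derivative^[k + 2] (fpol (k + 2)) =
      C (2 * ((k : ℝ) + 2)) * (X * derivative^[k + 1] (fpol (k + 1))
        + C ((k : ℝ) + 1) * derivative^[k] (fpol (k + 1))) := by
    rw [Function.iterate_succ_apply, hderiv, iterate_derivative_C_mul,
      iter_deriv_X_mul k (fpol (k + 1))]
  have heq := h1.symm.trans h2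
  simp only [C_add, C_mul, C_1, map_ofNat] at heq ⊢
  linear_combination heq

lemma dvd_fact (n : ℕ) : ∀ m : ℕ, m < n →
    ∃ h : ℝ[X], derivative^[m] (fpol n) = (X - C 1) ^ (n - m) * h := by
  intro m
  induction m with
  | zero =>
    intro _
    refine ⟨(X + C 1) ^ n, ?_⟩
    simp only [Function.iterate_zero, id_eq, Nat.sub_zero, fpol, ← mul_pow]
    congr 1
    simp only [C_1]
    ring
  | succ j ih =>
    intro hlt
    obtain ⟨h, hh⟩ := ih (by omega)
    have hexp : n - j = (n - (j + 1)) + 1 := by omega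
    rw [hexp] at hh
    refine ⟨C ((n : ℝ) - (j : ℝ)) * h + (X - C 1) * derivative h, ?_⟩
    rw [Function.iterate_succ_apply', hh, derivative_mul, derivative_pow, derivative_sub,
      derivative_X, derivative_C, sub_zero, mul_one, Nat.add_sub_cancel]
    have hcast : (((n - (j + 1) + 1 : ℕ)) : ℝ) = (n : ℝ) - (j : ℝ) := by
      push_cast [Nat.cast_sub (show j + 1 ≤ n by omega)]
      ring
    rw [hcast]
    ring

lemma eval_one_lt {m n : ℕ} (h : m < n) : (derivative^[m] (fpol n)).eval 1 = 0 := by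
  obtain ⟨g, hg⟩ := dvd_fact n m h
  rw [hg]
  have : n - m ≠ 0 := by omega
  simp [this, zero_pow this]

lemma eval_R (n : ℕ) : (derivative^[n] (fpol n)).eval 1 = 2 ^ n * n.factorial := by
  induction n with
  | zero => simp [fpol]
  | succ k ih =>
    have hderiv : derivative (fpol (k + 1)) = C (2 * ((k : ℝ) + 1)) * (X * fpol k) := by
      rw [fpol, derivative_pow]
      simp only [derivative_sub, derivative_one, derivative_pow, derivative_X, pow_one, mul_one,
        sub_zero, Nat.cast_ofNat, map_ofNat]
      push_cast
      simp only [C_add, C_mul, C_1, map_ofNat, fpol]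
      ring
    have h2 : derivative^[k + 1] (fpol (k + 1)) =
        C (2 * ((k : ℝ) + 1)) * (X * derivative^[k] (fpol k)
          + C (k : ℝ) * derivative^[k - 1] (fpol k)) := by
      rw [Function.iterate_succ_apply, hderiv, iterate_derivative_C_mul,
        iter_deriv_X_mul' k (fpol k)]
    rw [h2]
    have hz : (k : ℝ) * (derivative^[k - 1] (fpol k)).eval 1 = 0 := by
      cases k with
      | zero => simp
      | succ j =>
        rw [eval_one_lt (by omega : j + 1 - 1 < j + 1)]
        ring
    simp only [eval_mul, eval_add, eval_C, eval_X, one_mul, ih]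
    push_cast [Nat.factorial_succ]
    linear_combination (2 * ((k : ℝ) + 1)) * hz

lemma poly_ext {P Q : ℝ[X]} (h1 : derivative P = derivative Q) (h2 : P.eval 1 = Q.eval 1) :
    P = Q := by
  have hd : derivative (P - Q) = 0 := by rw [derivative_sub, h1, sub_self]
  have := eq_C_of_derivative_eq_zero hd
  have hc : (P - Q).coeff 0 = 0 := by
    have he := congrArg (eval 1) this
    rw [eval_sub, h2, sub_self, eval_C] at he
    exact he.symm
  have : P - Q = 0 := by rw [this, hc, map_zero]
  exact sub_eq_zero.mp this

lemma identityB (k : ℕ) :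
    C ((k : ℝ) + 2) * derivative^[k] (fpol (k + 1)) =
      X * derivative^[k + 1] (fpol (k + 1)) - C (2 * ((k : ℝ) + 1)) * derivative^[k] (fpol k) := by
  have hderivf : ∀ n : ℕ, derivative (fpol (n + 1)) = C (2 * ((n : ℝ) + 1)) * (X * fpol n) := by
    intro n
    rw [fpol, derivative_pow]
    simp only [derivative_sub, derivative_one, derivative_pow, derivative_X, pow_one, mul_one,
      sub_zero, Nat.cast_ofNat, map_ofNat]
    push_cast
    simp only [C_add, C_mul, C_1, map_ofNat, fpol]
    ring
  cases k with
  | zero =>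
    simp only [Nat.cast_zero, zero_add, Function.iterate_zero, id_eq, Function.iterate_one, fpol,
      pow_one, pow_zero]
    simp only [derivative_sub, derivative_one, derivative_pow, derivative_X, pow_one, mul_one,
      sub_zero, Nat.cast_ofNat, map_ofNat]
    ring
  | succ j =>
    apply poly_ext
    · -- derivatives agree
      have d1 : derivative (derivative^[j + 1] (fpol (j + 2))) =
          derivative^[j + 2] (fpol (j + 2)) :=
        (Function.iterate_succ_apply' derivative (j + 1) (fpol (j + 2))).symm
      have d2 : derivative (derivative^[j + 2] (fpol (j + 2))) =
          derivative^[j + 3] (fpol (j + 2)) :=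
        (Function.iterate_succ_apply' derivative (j + 2) (fpol (j + 2))).symm
      have d3 : derivative (derivative^[j + 1] (fpol (j + 1))) =
          derivative^[j + 2] (fpol (j + 1)) :=
        (Function.iterate_succ_apply' derivative (j + 1) (fpol (j + 1))).symm
      rw [derivative_mul, derivative_C, zero_mul, zero_add, d1,
        derivative_sub, derivative_mul, derivative_X, one_mul, derivative_mul, derivative_C,
        zero_mul, zero_add, d2, d3]
      have e1 : derivative^[j + 2] (fpol (j + 2)) =
          C (2 * ((j : ℝ) + 2)) * (X * derivative^[j + 1] (fpol (j + 1))
            + C ((j : ℝ) + 1) * derivative^[j] (fpol (j + 1))) := by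
        rw [Function.iterate_succ_apply, hderivf (j + 1), iterate_derivative_C_mul,
          iter_deriv_X_mul j (fpol (j + 1))]
        push_cast
        ring_nf
      have e2 : derivative^[j + 3] (fpol (j + 2)) =
          C (2 * ((j : ℝ) + 2)) * (X * derivative^[j + 2] (fpol (j + 1))
            + C ((j : ℝ) + 2) * derivative^[j + 1] (fpol (j + 1))) := by
        rw [show j + 3 = (j + 2) + 1 from rfl, Function.iterate_succ_apply, hderivf (j + 1),
          iterate_derivative_C_mul, iter_deriv_X_mul (j + 1) (fpol (j + 1))]
        push_cast
        ring_nf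
      have e3 := identityA j
      push_cast
      simp only [C_add, C_mul, C_1, map_ofNat] at e1 e2 e3 ⊢
      linear_combination (C (j : ℝ) + 2) * e1 - X * e2 - (2 * (C (j : ℝ) + 2)) * e3
    · -- values at 1 agree
      simp only [eval_mul, eval_sub, eval_add, eval_C, eval_X, one_mul]
      rw [eval_one_lt (show j + 1 < j + 2 by omega), eval_R (j + 2), eval_R (j + 1)]
      push_cast [Nat.factorial_succ]
      ring

lemma bonnet (n : ℕ) :
    derivative^[n + 2] (fpol (n + 2)) =
      C (2 * (2 * (n : ℝ) + 3)) * (X * derivative^[n + 1] (fpol (n + 1)))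
        - C (4 * ((n : ℝ) + 1) ^ 2) * derivative^[n] (fpol n) := by
  have hderivf : derivative (fpol (n + 2)) = C (2 * ((n : ℝ) + 2)) * (X * fpol (n + 1)) := by
    rw [fpol, derivative_pow]
    simp only [derivative_sub, derivative_one, derivative_pow, derivative_X, pow_one, mul_one,
      sub_zero, Nat.cast_ofNat, map_ofNat]
    push_cast
    simp only [C_add, C_mul, C_1, map_ofNat, fpol]
    ring
  have r1 : derivative^[n + 2] (fpol (n + 2)) =
      C (2 * ((n : ℝ) + 2)) * (X * derivative^[n + 1] (fpol (n + 1))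
        + C ((n : ℝ) + 1) * derivative^[n] (fpol (n + 1))) := by
    rw [Function.iterate_succ_apply, hderivf, iterate_derivative_C_mul,
      iter_deriv_X_mul n (fpol (n + 1))]
  have r2 := identityB n
  apply mul_left_cancel₀ (show (C ((n : ℝ) + 2) : ℝ[X]) ≠ 0 from by
    rw [Ne, C_eq_zero]
    positivity)
  simp only [C_add, C_mul, C_1, map_ofNat, map_pow] at r1 r2 ⊢
  linear_combination (C (n : ℝ) + 2) * r1 + (2 * (C (n : ℝ) + 2) * (C (n : ℝ) + 1)) * r2

lemma legendreP_zero (x : ℝ) : legendreP 0 x = 1 := by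
  simp [legendreP]

lemma legendreP_one (x : ℝ) : legendreP 1 x = x := by
  rw [legendreP_eq]
  simp only [fpol, pow_one, Function.iterate_one, derivative_sub, derivative_one, derivative_pow,
    derivative_X, pow_one, mul_one, sub_zero, Nat.cast_ofNat, map_ofNat]
  simp [Nat.factorial]

lemma legendreP_bonnet (n : ℕ) (y : ℝ) :
    ((n : ℝ) + 2) * legendreP (n + 2) y =
      (2 * (n : ℝ) + 3) * y * legendreP (n + 1) y - ((n : ℝ) + 1) * legendreP n y := by
  have hb := congrArg (eval y) (bonnet n)
  simp only [eval_mul, eval_sub, eval_add, eval_C, eval_X] at hb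
  rw [legendreP_eq, legendreP_eq, legendreP_eq, hb]
  have hfac1 : (((n + 1).factorial : ℕ) : ℝ) = ((n : ℝ) + 1) * n.factorial := by
    push_cast [Nat.factorial_succ]; ring
  have hfac2 : (((n + 2).factorial : ℕ) : ℝ) = ((n : ℝ) + 2) * (((n : ℝ) + 1) * n.factorial) := by
    push_cast [Nat.factorial_succ]; ring
  rw [hfac1, hfac2]
  have h2 : (2 : ℝ) ^ (n + 2) = 4 * 2 ^ n := by rw [pow_succ, pow_succ]; ring
  have h1 : (2 : ℝ) ^ (n + 1) = 2 * 2 ^ n := by rw [pow_succ]; ring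
  rw [h1, h2]
  have hne : (2 : ℝ) ^ n ≠ 0 := by positivity
  have hfne : ((n.factorial : ℕ) : ℝ) ≠ 0 := by
    exact_mod_cast Nat.cast_ne_zero.mpr n.factorial_ne_zero
  have hn1 : ((n : ℝ) + 1) ≠ 0 := by positivity
  have hn2 : ((n : ℝ) + 2) ≠ 0 := by positivity
  field_simp
  ring

lemma legendreL_rec (p : ℕ) (a : ℝ) :
    a * legendreL p a =
      (if p = 0 then 0 else legendreC (p - 1)) * legendreL (p - 1) a
        + legendreC p * legendreL (p + 1) a := by
  cases p with
  | zero =>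
    simp only [if_pos rfl, zero_mul, zero_add, legendreL, legendreC, legendreP_zero,
      legendreP_one, Nat.cast_zero, Nat.cast_one]
    norm_num
    have h3 : Real.sqrt 3 ≠ 0 := by positivity
    have h : Real.sqrt 3 / Real.sqrt 2 * a = Real.sqrt 3 * (a * (Real.sqrt 2)⁻¹) := by
      ring
    rw [h, ← mul_assoc, inv_mul_cancel₀ h3, one_mul]
  | succ m =>
    simp only [Nat.succ_ne_zero, if_neg, Nat.add_sub_cancel]
    have hbon := legendreP_bonnet m a
    simp only [legendreL, legendreC]
    push_cast
    have e1 : (2 * ((m : ℝ) + 1) + 1) = 2 * (m : ℝ) + 3 := by ring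
    have e2 : (2 * ((m : ℝ) + 1 + 1) + 1) = 2 * (m : ℝ) + 5 := by ring
    have e3 : (2 * ((m : ℝ) + 1) + 3) = 2 * (m : ℝ) + 5 := by ring
    rw [e1, e2, e3]
    set s0 := Real.sqrt ((2 * (m : ℝ) + 1) / 2) with hs0
    set s1 := Real.sqrt ((2 * (m : ℝ) + 3) / 2) with hs1
    set s2 := Real.sqrt ((2 * (m : ℝ) + 5) / 2) with hs2
    have hA : ((m : ℝ) + 1) / Real.sqrt ((2 * m + 3) * (2 * m + 1)) * s0 * (2 * m + 3) =
        ((m : ℝ) + 1) * s1 := by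
      rw [hs0, hs1, Real.sqrt_mul (by positivity), Real.sqrt_div (by positivity) 2,
        Real.sqrt_div (by positivity) 2]
      have n1 : Real.sqrt (2 * (m : ℝ) + 1) ≠ 0 := by positivity
      have n3 : Real.sqrt (2 * (m : ℝ) + 3) ≠ 0 := by positivity
      have n2 : Real.sqrt (2 : ℝ) ≠ 0 := by positivity
      have m3 : Real.sqrt (2 * (m : ℝ) + 3) * Real.sqrt (2 * (m : ℝ) + 3) = 2 * m + 3 :=
        Real.mul_self_sqrt (by positivity)
      field_simp
      exact (Real.sq_sqrt (by positivity)).symm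
    have hB : ((m : ℝ) + 2) / Real.sqrt ((2 * m + 5) * (2 * m + 3)) * s2 * (2 * m + 3) =
        ((m : ℝ) + 2) * s1 := by
      rw [hs2, hs1, Real.sqrt_mul (by positivity), Real.sqrt_div (by positivity) 2,
        Real.sqrt_div (by positivity) 2]
      have n5 : Real.sqrt (2 * (m : ℝ) + 5) ≠ 0 := by positivity
      have n3 : Real.sqrt (2 * (m : ℝ) + 3) ≠ 0 := by positivity
      have n2 : Real.sqrt (2 : ℝ) ≠ 0 := by positivity
      have m3 : Real.sqrt (2 * (m : ℝ) + 3) * Real.sqrt (2 * (m : ℝ) + 3) = 2 * m + 3 :=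
        Real.mul_self_sqrt (by positivity)
      field_simp
      exact (Real.sq_sqrt (by positivity)).symm
    have h23 : (2 * (m : ℝ) + 3) ≠ 0 := by positivity
    apply mul_left_cancel₀ h23
    linear_combination (- s1) * hbon - legendreP m a * hA - legendreP (m + 2) a * hB

lemma double_to_prod {E : Type*} [NormedAddCommGroup E] [NormedSpace ℝ E] [CompleteSpace E]
    (f : ℝ → ℝ → E)
    (hf : ContinuousOn (fun z : ℝ × ℝ => f z.1 z.2)
      (Set.Icc (-1 : ℝ) 1 ×ˢ Set.Icc (-1 : ℝ) 1)) :
    (∫ a in (-1 : ℝ)..1, ∫ b in (-1 : ℝ)..1, f a b) =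
      ∫ z : ℝ × ℝ, f z.1 z.2
        ∂(((volume : Measure ℝ).prod volume).restrict
          (Set.Ioc (-1 : ℝ) 1 ×ˢ Set.Ioc (-1 : ℝ) 1)) := by
  have hsub : Set.Ioc (-1 : ℝ) 1 ×ˢ Set.Ioc (-1 : ℝ) 1 ⊆
      Set.Icc (-1 : ℝ) 1 ×ˢ Set.Icc (-1 : ℝ) 1 :=
    Set.prod_mono Set.Ioc_subset_Icc_self Set.Ioc_subset_Icc_self
  have hint : IntegrableOn (fun z : ℝ × ℝ => f z.1 z.2)
      (Set.Ioc (-1 : ℝ) 1 ×ˢ Set.Ioc (-1 : ℝ) 1) ((volume : Measure ℝ).prod volume) :=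
    (hf.integrableOn_compact (isCompact_Icc.prod isCompact_Icc)).mono_set hsub
  have hint' : Integrable (fun z : ℝ × ℝ => f z.1 z.2)
      ((volume.restrict (Set.Ioc (-1 : ℝ) 1)).prod (volume.restrict (Set.Ioc (-1 : ℝ) 1))) := by
    rw [Measure.prod_restrict]; exact hint
  have h2 := MeasureTheory.integral_prod (μ := volume.restrict (Set.Ioc (-1 : ℝ) 1))
    (ν := volume.restrict (Set.Ioc (-1 : ℝ) 1)) (fun z : ℝ × ℝ => f z.1 z.2) hint'
  rw [Measure.prod_restrict] at h2
  have h1 : (∫ a in (-1 : ℝ)..1, ∫ b in (-1 : ℝ)..1, f a b)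
      = ∫ a in Set.Ioc (-1 : ℝ) 1, ∫ b in Set.Ioc (-1 : ℝ) 1, f a b := by
    rw [intervalIntegral.integral_of_le (by norm_num : (-1 : ℝ) ≤ 1)]
    refine setIntegral_congr_fun measurableSet_Ioc fun a _ => ?_
    rw [intervalIntegral.integral_of_le (by norm_num : (-1 : ℝ) ≤ 1)]
  rw [h1, ← h2]

set_option maxHeartbeats 1600000 in
/-- exact moment dynamics of the Legendre coefficients
`x_{p,q}(t) = ∫∫ X(t,a,b) L_p(a) L_q(b) da db` of a solution of the
parameterized bilinear system
`∂X/∂t = α(a)·𝒜·X + β(b)·(Σ_j u_j(t)·ℬ_j)·X` with `α(a) = ᾱ + α̲·a`,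
`β(b) = β̄ + β̲·b`. -/
theorem legendre_moment_dynamics (N m : ℕ)
    (𝒜 : Matrix (Fin N) (Fin N) ℝ) (ℬ : Fin m → Matrix (Fin N) (Fin N) ℝ)
    (u : Fin m → ℝ → ℝ) (hu : ∀ j, Continuous (u j))
    (αbar αund βbar βund : ℝ)
    (X : ℝ → ℝ → ℝ → (Fin N → ℝ))
    (hXcont : ContinuousOn (fun z : ℝ × ℝ × ℝ => X z.1 z.2.1 z.2.2)
      (Set.univ ×ˢ Set.Icc (-1 : ℝ) 1 ×ˢ Set.Icc (-1 : ℝ) 1))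
    (Xt : ℝ → ℝ → ℝ → (Fin N → ℝ))
    (hXt : ∀ t : ℝ, ∀ a ∈ Set.Icc (-1 : ℝ) 1, ∀ b ∈ Set.Icc (-1 : ℝ) 1,
      HasDerivAt (fun s : ℝ => X s a b) (Xt t a b) t)
    (hXtcont : ContinuousOn (fun z : ℝ × ℝ × ℝ => Xt z.1 z.2.1 z.2.2)
      (Set.univ ×ˢ Set.Icc (-1 : ℝ) 1 ×ˢ Set.Icc (-1 : ℝ) 1))
    (hPDE : ∀ t : ℝ, ∀ a ∈ Set.Icc (-1 : ℝ) 1, ∀ b ∈ Set.Icc (-1 : ℝ) 1,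
      Xt t a b = (αbar + αund * a) • 𝒜.mulVec (X t a b) +
        (βbar + βund * b) • (∑ j, u j t • ℬ j).mulVec (X t a b))
    (x : ℕ → ℕ → ℝ → (Fin N → ℝ))
    (hx : ∀ p q : ℕ, ∀ t : ℝ,
      x p q t = ∫ a in (-1 : ℝ)..1, ∫ b in (-1 : ℝ)..1,
        (legendreL p a * legendreL q b) • X t a b) :
    ∀ p q : ℕ, ∀ t : ℝ,
      HasDerivAt (x p q)
        (𝒜.mulVec (αbar • x p q t +
            αund • ((if p = 0 then 0 else legendreC (p - 1) • x (p - 1) q t) +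
              legendreC p • x (p + 1) q t)) +
          (∑ j, u j t • ℬ j).mulVec (βbar • x p q t +
            βund • ((if q = 0 then 0 else legendreC (q - 1) • x p (q - 1) t) +
              legendreC q • x p (q + 1) t))) t := by
  intro p q t₀
  have hI : IsCompact (Set.Icc (-1 : ℝ) 1) := isCompact_Icc
  set S : Set ℝ := Set.Ioc (-1 : ℝ) 1 with hSdef
  set μ : MeasureTheory.Measure (ℝ × ℝ) :=
    ((MeasureTheory.volume : MeasureTheory.Measure ℝ).prod MeasureTheory.volume).restrict
      (S ×ˢ S) with hμdef
  have hmeasSS : MeasurableSet (S ×ˢ S) := measurableSet_Ioc.prod measurableSet_Ioc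
  have hsub : S ×ˢ S ⊆ Set.Icc (-1 : ℝ) 1 ×ˢ Set.Icc (-1 : ℝ) 1 :=
    Set.prod_mono Set.Ioc_subset_Icc_self Set.Ioc_subset_Icc_self
  haveI hfin : MeasureTheory.IsFiniteMeasure μ := by
    constructor
    rw [hμdef, MeasureTheory.Measure.restrict_apply_univ, MeasureTheory.Measure.prod_prod]
    exact ENNReal.mul_lt_top (by simp [hSdef, Real.volume_Ioc]) (by simp [hSdef, Real.volume_Ioc])
  -- continuity of weighted integrands
  have hYc : ∀ Y : ℝ → ℝ → ℝ → (Fin N → ℝ),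
      ContinuousOn (fun z : ℝ × ℝ × ℝ => Y z.1 z.2.1 z.2.2)
        (Set.univ ×ˢ Set.Icc (-1 : ℝ) 1 ×ˢ Set.Icc (-1 : ℝ) 1) →
      ∀ w : ℝ × ℝ → ℝ, Continuous w → ∀ t : ℝ,
      ContinuousOn (fun z : ℝ × ℝ => w z • Y t z.1 z.2)
        (Set.Icc (-1 : ℝ) 1 ×ˢ Set.Icc (-1 : ℝ) 1) := by
    intro Y hY w hw t
    have h1 : ContinuousOn (fun z : ℝ × ℝ => Y t z.1 z.2)
        (Set.Icc (-1 : ℝ) 1 ×ˢ Set.Icc (-1 : ℝ) 1) := by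
      have heq : (fun z : ℝ × ℝ => Y t z.1 z.2)
          = (fun z : ℝ × ℝ × ℝ => Y z.1 z.2.1 z.2.2) ∘ (fun z : ℝ × ℝ => (t, z)) := rfl
      rw [heq]
      exact hY.comp (Continuous.continuousOn (by continuity)) fun z hz => ⟨Set.mem_univ _, hz⟩
    exact hw.continuousOn.smul h1
  have hInt : ∀ Y : ℝ → ℝ → ℝ → (Fin N → ℝ),
      ContinuousOn (fun z : ℝ × ℝ × ℝ => Y z.1 z.2.1 z.2.2)
        (Set.univ ×ˢ Set.Icc (-1 : ℝ) 1 ×ˢ Set.Icc (-1 : ℝ) 1) →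
      ∀ w : ℝ × ℝ → ℝ, Continuous w → ∀ t : ℝ,
      MeasureTheory.Integrable (fun z : ℝ × ℝ => w z • Y t z.1 z.2) μ := by
    intro Y hY w hw t
    rw [hμdef]
    exact ((hYc Y hY w hw t).integrableOn_compact (hI.prod hI)).mono_set hsub
  have hLw : ∀ p' q' : ℕ, Continuous (fun z : ℝ × ℝ => legendreL p' z.1 * legendreL q' z.2) :=
    fun p' q' => ((legendreL_continuous p').comp continuous_fst).mul
      ((legendreL_continuous q').comp continuous_snd)
  have hx' : ∀ p' q' : ℕ, ∀ t : ℝ, x p' q' t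
      = ∫ z : ℝ × ℝ, (legendreL p' z.1 * legendreL q' z.2) • X t z.1 z.2 ∂μ := by
    intro p' q' t
    rw [hx p' q' t]
    exact double_to_prod (fun a b => (legendreL p' a * legendreL q' b) • X t a b)
      (hYc X hXcont _ (hLw p' q') t)
  -- bound for the derivative integrand
  have hF'cont : ContinuousOn (fun z : ℝ × ℝ × ℝ =>
      (legendreL p z.2.1 * legendreL q z.2.2) • Xt z.1 z.2.1 z.2.2)
      (Set.univ ×ˢ Set.Icc (-1 : ℝ) 1 ×ˢ Set.Icc (-1 : ℝ) 1) := by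
    refine ContinuousOn.smul (Continuous.continuousOn (f := fun z : ℝ × ℝ × ℝ => legendreL p z.2.1 * legendreL q z.2.2) ?_) hXtcont
    exact ((legendreL_continuous p).comp (continuous_fst.comp continuous_snd)).mul
      ((legendreL_continuous q).comp (continuous_snd.comp continuous_snd))
  obtain ⟨Cb, hCb⟩ := IsCompact.exists_bound_of_continuousOn
    ((isCompact_Icc (a := t₀ - 1) (b := t₀ + 1)).prod (hI.prod hI))
    (hF'cont.mono (fun z hz => ⟨Set.mem_univ _, hz.2⟩))
  -- differentiate under the integral sign
  have hF_meas : ∀ᶠ t in nhds t₀, MeasureTheory.AEStronglyMeasurable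
      (fun z : ℝ × ℝ => (legendreL p z.1 * legendreL q z.2) • X t z.1 z.2) μ := by
    refine Filter.Eventually.of_forall fun t => ?_
    rw [hμdef]
    exact ((hYc X hXcont _ (hLw p q) t).mono hsub).aestronglyMeasurable hmeasSS
  have hF'_meas : MeasureTheory.AEStronglyMeasurable
      (fun z : ℝ × ℝ => (legendreL p z.1 * legendreL q z.2) • Xt t₀ z.1 z.2) μ := by
    rw [hμdef]
    exact ((hYc Xt hXtcont _ (hLw p q) t₀).mono hsub).aestronglyMeasurable hmeasSS
  have h_bound : ∀ᵐ z ∂μ, ∀ t ∈ Metric.ball t₀ 1,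
      ‖(legendreL p z.1 * legendreL q z.2) • Xt t z.1 z.2‖ ≤ Cb := by
    rw [hμdef]
    filter_upwards [MeasureTheory.ae_restrict_mem hmeasSS] with z hz
    intro t ht
    have ht' : t ∈ Set.Icc (t₀ - 1) (t₀ + 1) := by
      have h1 := Metric.mem_ball.mp ht
      rw [Real.dist_eq] at h1
      have h2 := abs_lt.mp h1
      constructor <;> [linarith [h2.1]; linarith [h2.2]]
    exact hCb (t, z) ⟨ht', hsub hz⟩
  have h_diff : ∀ᵐ z ∂μ, ∀ t ∈ Metric.ball t₀ 1,
      HasDerivAt (fun s : ℝ => (legendreL p z.1 * legendreL q z.2) • X s z.1 z.2)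
        ((legendreL p z.1 * legendreL q z.2) • Xt t z.1 z.2) t := by
    rw [hμdef]
    filter_upwards [MeasureTheory.ae_restrict_mem hmeasSS] with z hz
    intro t _
    exact (hXt t z.1 (Set.Ioc_subset_Icc_self hz.1) z.2
      (Set.Ioc_subset_Icc_self hz.2)).const_smul (legendreL p z.1 * legendreL q z.2)
  have hdom := hasDerivAt_integral_of_dominated_loc_of_deriv_le (μ := μ)
    (F := fun t (z : ℝ × ℝ) => (legendreL p z.1 * legendreL q z.2) • X t z.1 z.2)
    (F' := fun t (z : ℝ × ℝ) => (legendreL p z.1 * legendreL q z.2) • Xt t z.1 z.2)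
    (bound := fun _ => Cb) (Metric.ball_mem_nhds t₀ one_pos) hF_meas (hInt X hXcont _ (hLw p q) t₀) hF'_meas
    h_bound (MeasureTheory.integrable_const _) h_diff
  have hderiv := hdom.2
  have hxeq : (fun t => ∫ z : ℝ × ℝ,
      (legendreL p z.1 * legendreL q z.2) • X t z.1 z.2 ∂μ) = x p q :=
    funext fun t => (hx' p q t).symm
  rw [hxeq] at hderiv
  -- compute the value of the derivative
  have hMXc : ∀ M : Matrix (Fin N) (Fin N) ℝ,
      ContinuousOn (fun z : ℝ × ℝ × ℝ => M.mulVec (X z.1 z.2.1 z.2.2))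
        (Set.univ ×ˢ Set.Icc (-1 : ℝ) 1 ×ˢ Set.Icc (-1 : ℝ) 1) := fun M =>
    (LinearMap.toContinuousLinearMap (Matrix.mulVecLin M)).continuous.comp_continuousOn hXcont
  have hwA : Continuous (fun z : ℝ × ℝ =>
      (legendreL p z.1 * legendreL q z.2) * (αbar + αund * z.1)) :=
    (hLw p q).mul (continuous_const.add (continuous_const.mul continuous_fst))
  have hwB : Continuous (fun z : ℝ × ℝ =>
      (legendreL p z.1 * legendreL q z.2) * (βbar + βund * z.2)) :=
    (hLw p q).mul (continuous_const.add (continuous_const.mul continuous_snd))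
  have hsplit : (∫ z : ℝ × ℝ, (legendreL p z.1 * legendreL q z.2) • Xt t₀ z.1 z.2 ∂μ)
      = (∫ z : ℝ × ℝ, ((legendreL p z.1 * legendreL q z.2) * (αbar + αund * z.1)) •
            𝒜.mulVec (X t₀ z.1 z.2) ∂μ)
        + ∫ z : ℝ × ℝ, ((legendreL p z.1 * legendreL q z.2) * (βbar + βund * z.2)) •
            (∑ j, u j t₀ • ℬ j).mulVec (X t₀ z.1 z.2) ∂μ := by
    rw [← MeasureTheory.integral_add
      (hInt (fun t a b => 𝒜.mulVec (X t a b)) (hMXc 𝒜) _ hwA t₀)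
      (hInt (fun t a b => (∑ j, u j t₀ • ℬ j).mulVec (X t a b))
        (hMXc (∑ j, u j t₀ • ℬ j)) _ hwB t₀)]
    refine MeasureTheory.integral_congr_ae ?_
    rw [hμdef]
    filter_upwards [MeasureTheory.ae_restrict_mem hmeasSS] with z hz
    rw [hPDE t₀ z.1 (Set.Ioc_subset_Icc_self hz.1) z.2 (Set.Ioc_subset_Icc_self hz.2),
      smul_add, smul_smul, smul_smul]
  have hpull : ∀ (M : Matrix (Fin N) (Fin N) ℝ) (w : ℝ × ℝ → ℝ), Continuous w →
      (∫ z : ℝ × ℝ, w z • M.mulVec (X t₀ z.1 z.2) ∂μ)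
        = M.mulVec (∫ z : ℝ × ℝ, w z • X t₀ z.1 z.2 ∂μ) := by
    intro M w hw
    have h1 : ∀ z : ℝ × ℝ, w z • M.mulVec (X t₀ z.1 z.2)
        = (LinearMap.toContinuousLinearMap (Matrix.mulVecLin M)) (w z • X t₀ z.1 z.2) := by
      intro z
      rw [_root_.map_smul]
      simp [Matrix.mulVecLin_apply]
    simp_rw [h1]
    rw [ContinuousLinearMap.integral_comp_comm _ (hInt X hXcont w hw t₀)]
    simp [Matrix.mulVecLin_apply]
  have hA4 : (∫ z : ℝ × ℝ, ((legendreL p z.1 * legendreL q z.2) * (αbar + αund * z.1)) •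
        X t₀ z.1 z.2 ∂μ)
      = αbar • x p q t₀ +
          αund • ((if p = 0 then 0 else legendreC (p - 1) • x (p - 1) q t₀) +
            legendreC p • x (p + 1) q t₀) := by
    have hpt : ∀ z : ℝ × ℝ,
        ((legendreL p z.1 * legendreL q z.2) * (αbar + αund * z.1)) • X t₀ z.1 z.2
        = αbar • ((legendreL p z.1 * legendreL q z.2) • X t₀ z.1 z.2)
          + ((αund * (if p = 0 then 0 else legendreC (p - 1))) •
              ((legendreL (p - 1) z.1 * legendreL q z.2) • X t₀ z.1 z.2)
            + (αund * legendreC p) •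
              ((legendreL (p + 1) z.1 * legendreL q z.2) • X t₀ z.1 z.2)) := by
      intro z
      have hr := legendreL_rec p z.1
      rw [smul_smul, smul_smul, smul_smul, ← add_smul, ← add_smul]
      congr 1
      linear_combination (αund * legendreL q z.2) * hr
    have i1 : MeasureTheory.Integrable (fun z : ℝ × ℝ =>
        αbar • ((legendreL p z.1 * legendreL q z.2) • X t₀ z.1 z.2)) μ :=
      (hInt X hXcont _ (hLw p q) t₀).smul αbar
    have i2 : MeasureTheory.Integrable (fun z : ℝ × ℝ =>
        (αund * (if p = 0 then 0 else legendreC (p - 1))) •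
          ((legendreL (p - 1) z.1 * legendreL q z.2) • X t₀ z.1 z.2)) μ :=
      (hInt X hXcont _ (hLw (p - 1) q) t₀).smul (αund * (if p = 0 then 0 else legendreC (p - 1)))
    have i3 : MeasureTheory.Integrable (fun z : ℝ × ℝ =>
        (αund * legendreC p) •
          ((legendreL (p + 1) z.1 * legendreL q z.2) • X t₀ z.1 z.2)) μ :=
      (hInt X hXcont _ (hLw (p + 1) q) t₀).smul (αund * legendreC p)
    simp_rw [hpt]
    have h123 := MeasureTheory.integral_add i1 (i2.add i3)
    simp only [Pi.add_apply] at h123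
    rw [h123, MeasureTheory.integral_add i2 i3]
    simp only [MeasureTheory.integral_smul]
    rw [← hx' p q t₀, ← hx' (p - 1) q t₀, ← hx' (p + 1) q t₀]
    by_cases hp : p = 0
    · simp [hp, smul_smul]
    · simp [hp, smul_smul, smul_add]
  have hB4 : (∫ z : ℝ × ℝ, ((legendreL p z.1 * legendreL q z.2) * (βbar + βund * z.2)) •
        X t₀ z.1 z.2 ∂μ)
      = βbar • x p q t₀ +
          βund • ((if q = 0 then 0 else legendreC (q - 1) • x p (q - 1) t₀) +
            legendreC q • x p (q + 1) t₀) := by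
    have hpt : ∀ z : ℝ × ℝ,
        ((legendreL p z.1 * legendreL q z.2) * (βbar + βund * z.2)) • X t₀ z.1 z.2
        = βbar • ((legendreL p z.1 * legendreL q z.2) • X t₀ z.1 z.2)
          + ((βund * (if q = 0 then 0 else legendreC (q - 1))) •
              ((legendreL p z.1 * legendreL (q - 1) z.2) • X t₀ z.1 z.2)
            + (βund * legendreC q) •
              ((legendreL p z.1 * legendreL (q + 1) z.2) • X t₀ z.1 z.2)) := by
      intro z
      have hr := legendreL_rec q z.2
      rw [smul_smul, smul_smul, smul_smul, ← add_smul, ← add_smul]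
      congr 1
      linear_combination (βund * legendreL p z.1) * hr
    have i1 : MeasureTheory.Integrable (fun z : ℝ × ℝ =>
        βbar • ((legendreL p z.1 * legendreL q z.2) • X t₀ z.1 z.2)) μ :=
      (hInt X hXcont _ (hLw p q) t₀).smul βbar
    have i2 : MeasureTheory.Integrable (fun z : ℝ × ℝ =>
        (βund * (if q = 0 then 0 else legendreC (q - 1))) •
          ((legendreL p z.1 * legendreL (q - 1) z.2) • X t₀ z.1 z.2)) μ :=
      (hInt X hXcont _ (hLw p (q - 1)) t₀).smul (βund * (if q = 0 then 0 else legendreC (q - 1)))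
    have i3 : MeasureTheory.Integrable (fun z : ℝ × ℝ =>
        (βund * legendreC q) •
          ((legendreL p z.1 * legendreL (q + 1) z.2) • X t₀ z.1 z.2)) μ :=
      (hInt X hXcont _ (hLw p (q + 1)) t₀).smul (βund * legendreC q)
    simp_rw [hpt]
    have h123 := MeasureTheory.integral_add i1 (i2.add i3)
    simp only [Pi.add_apply] at h123
    rw [h123, MeasureTheory.integral_add i2 i3]
    simp only [MeasureTheory.integral_smul]
    rw [← hx' p q t₀, ← hx' p (q - 1) t₀, ← hx' p (q + 1) t₀]
    by_cases hq : q = 0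
    · simp [hq, smul_smul]
    · simp [hq, smul_smul, smul_add]
  have hval : (∫ z : ℝ × ℝ, (legendreL p z.1 * legendreL q z.2) • Xt t₀ z.1 z.2 ∂μ)
      = 𝒜.mulVec (αbar • x p q t₀ +
            αund • ((if p = 0 then 0 else legendreC (p - 1) • x (p - 1) q t₀) +
              legendreC p • x (p + 1) q t₀)) +
          (∑ j, u j t₀ • ℬ j).mulVec (βbar • x p q t₀ +
            βund • ((if q = 0 then 0 else legendreC (q - 1) • x p (q - 1) t₀) +
              legendreC q • x p (q + 1) t₀)) := by
    rw [hsplit, hpull 𝒜 _ hwA, hpull (∑ j, u j t₀ • ℬ j) _ hwB, hA4, hB4]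
  exact hval ▸ hderiv
end

section
/- Let A and B be real (or complex) N×N matrices. Then the derivative of the matrix exponential in the direction B is given by the integral (Duhamel) formula: d/du exp(A + uB) evaluated at u = 0 equals ∫_0^1 exp(s·A) · B · exp((1−s)·A) ds. Equivalently, the map u ↦ exp(A + uB) is differentiable at u = 0 with derivative ∫_0^1 e^{sA} B e^{(1−s)A} ds. (This exact formula underlies the computation of the Jacobian entries ∂U_k/∂u_n^m(t_k) of the evolution operator with respect to the piecewise-constant control amplitudes.) -/
open Matrix

attribute [local instance] Matrix.linftyOpNormedAddCommGroup
  Matrix.linftyOpNormedSpace Matrix.linftyOpNormedRing Matrix.linftyOpNormedAlgebra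

set_option maxHeartbeats 1000000 in
set_option synthInstance.maxHeartbeats 400000 in
open NormedSpace in
lemma duhamel_norm_exp_le {𝕂 : Type*} [RCLike 𝕂] {N : ℕ}
    (x : Matrix (Fin N) (Fin N) 𝕂) : ‖exp x‖ ≤ Real.exp ‖x‖ := by
  have h1 : ‖(1 : Matrix (Fin N) (Fin N) 𝕂)‖ ≤ 1 := by
    rcases Nat.eq_zero_or_pos N with h | h
    · subst h
      have : (1 : Matrix (Fin 0) (Fin 0) 𝕂) = 0 := Subsingleton.elim _ _
      simp [this]
    · haveI : Nonempty (Fin N) := ⟨⟨0, h⟩⟩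
      exact norm_one.le
  have hterm : ∀ n : ℕ, ‖((n.factorial : ℝ)⁻¹ • x ^ n : Matrix (Fin N) (Fin N) 𝕂)‖
      ≤ ‖x‖ ^ n / n.factorial := by
    intro n
    rcases Nat.eq_zero_or_pos n with h | h
    · subst h
      simp only [pow_zero, Nat.factorial_zero, Nat.cast_one, inv_one, one_smul, div_one]
      exact h1
    · rw [norm_smul, norm_inv, Real.norm_natCast, div_eq_inv_mul]
      exact mul_le_mul_of_nonneg_left (norm_pow_le' x h) (by positivity)
  have hsum : Summable fun n : ℕ => ‖x‖ ^ n / (n.factorial : ℝ) :=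
    Real.summable_pow_div_factorial ‖x‖
  calc ‖exp x‖ = ‖∑' n : ℕ, ((n.factorial : ℝ)⁻¹ • x ^ n : Matrix (Fin N) (Fin N) 𝕂)‖ := by
        rw [exp_eq_tsum ℝ]
    _ ≤ ∑' n : ℕ, ‖((n.factorial : ℝ)⁻¹ • x ^ n : Matrix (Fin N) (Fin N) 𝕂)‖ :=
        norm_tsum_le_tsum_norm ((hsum.of_nonneg_of_le (fun n => norm_nonneg _) hterm))
    _ ≤ ∑' n : ℕ, ‖x‖ ^ n / (n.factorial : ℝ) :=
        Summable.tsum_le_tsum hterm (hsum.of_nonneg_of_le (fun n => norm_nonneg _) hterm) hsum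
    _ = Real.exp ‖x‖ := by
        rw [Real.exp_eq_exp_ℝ, exp_eq_tsum_div]

set_option maxHeartbeats 1000000 in
set_option synthInstance.maxHeartbeats 400000 in
/-- Duhamel formula: the map `u ↦ exp(A + uB)` on N×N matrices
over ℝ or ℂ is differentiable at `u = 0` with derivative
`∫_0^1 e^{sA} B e^{(1−s)A} ds`. -/
theorem deriv_exp_duhamel (𝕂 : Type*) [RCLike 𝕂] (N : ℕ)
    (A B : Matrix (Fin N) (Fin N) 𝕂) :
    HasDerivAt (fun u : 𝕂 => NormedSpace.exp (A + u • B))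
      (∫ s in (0 : ℝ)..1,
        NormedSpace.exp (s • A) * B * NormedSpace.exp ((1 - s) • A))
      0 := by
  have hexp : (NormedSpace.exp : Matrix (Fin N) (Fin N) 𝕂 → _) = NormedSpace.exp :=
    rfl
  set I : 𝕂 → Matrix (Fin N) (Fin N) 𝕂 := fun u =>
    ∫ s in (0 : ℝ)..1,
      NormedSpace.exp (s • (A + u • B)) * B * NormedSpace.exp ((1 - s) • A) with hIdef
  -- Step 1: FTC identity
  have key : ∀ u : 𝕂,
      NormedSpace.exp (A + u • B) - NormedSpace.exp A = u • I u := by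
    intro u
    set M : Matrix (Fin N) (Fin N) 𝕂 := A + u • B with hM
    have hD : ∀ s : ℝ, HasDerivAt
        (fun t : ℝ => NormedSpace.exp (t • M) * NormedSpace.exp ((1 - t) • A))
        (u • (NormedSpace.exp (s • M) * B * NormedSpace.exp ((1 - s) • A))) s := by
      intro s
      have h1 : HasDerivAt (fun t : ℝ => NormedSpace.exp (t • M))
          (NormedSpace.exp (s • M) * M) s := hasDerivAt_exp_smul_const M s
      have hlin : HasDerivAt (fun t : ℝ => 1 - t) (-1 : ℝ) s := by
        simpa using (hasDerivAt_id s).const_sub 1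
      have h2 : HasDerivAt (fun t : ℝ => NormedSpace.exp ((1 - t) • A))
          ((-1 : ℝ) • (NormedSpace.exp ((1 - s) • A) * A)) s :=
        (hasDerivAt_exp_smul_const A (1 - s)).scomp s hlin
      have h3 := h1.mul h2
      refine h3.congr_deriv (Eq.symm ?_)
      have hc : NormedSpace.exp ((1 - s) • A) * A = A * NormedSpace.exp ((1 - s) • A) :=
        (((Commute.refl A).smul_left (1 - s)).exp_left)
      rw [neg_one_smul, mul_neg, ← sub_eq_add_neg, hc]
      rw [eq_comm, mul_assoc, ← mul_sub, ← sub_mul, hM, add_sub_cancel_left,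
        smul_mul_assoc, mul_smul_comm]
      rw [mul_assoc]
    have hci : Continuous (fun s : ℝ =>
        u • (NormedSpace.exp (s • M) * B * NormedSpace.exp ((1 - s) • A))) := by
      refine Continuous.const_smul (M := 𝕂) ?_ u
      exact ((NormedSpace.exp_continuous.comp (continuous_id.smul continuous_const)).mul
        continuous_const).mul
        (NormedSpace.exp_continuous.comp ((continuous_const.sub continuous_id).smul
          continuous_const))
    have hftc := intervalIntegral.integral_eq_sub_of_hasDerivAt
      (fun s _ => hD s) (hci.intervalIntegrable 0 1)
    rw [intervalIntegral.integral_smul] at hftc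
    simp only [one_smul, zero_smul, sub_zero, sub_self, NormedSpace.exp_zero, mul_one,
      one_mul] at hftc
    exact hftc.symm
  -- Step 2: continuity of I at 0
  have hcont : ContinuousAt I 0 := by
    rw [hIdef]
    apply intervalIntegral.continuousAt_of_dominated_interval
      (bound := fun _ => Real.exp (‖A‖ + ‖B‖) * ‖B‖ * Real.exp ‖A‖)
    · filter_upwards with u
      apply Continuous.aestronglyMeasurable
      exact ((NormedSpace.exp_continuous.comp (continuous_id.smul continuous_const)).mul
        continuous_const).mul
        (NormedSpace.exp_continuous.comp ((continuous_const.sub continuous_id).smul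
          continuous_const))
    · filter_upwards [Metric.ball_mem_nhds (0 : 𝕂) one_pos] with u hu
      filter_upwards with s hs
      have hs' : s ∈ Set.Ioc (0 : ℝ) 1 := by
        rwa [Set.uIoc_of_le (by norm_num : (0:ℝ) ≤ 1)] at hs
      have hs0 : 0 ≤ s := hs'.1.le
      have hs1 : s ≤ 1 := hs'.2
      have hu1 : ‖u‖ ≤ 1 := by
        simpa [dist_eq_norm] using (Metric.mem_ball.mp hu).le
      have e1 : ‖NormedSpace.exp (s • (A + u • B))‖ ≤ Real.exp (‖A‖ + ‖B‖) := by
        refine (duhamel_norm_exp_le _).trans (Real.exp_le_exp.mpr ?_)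
        rw [norm_smul, Real.norm_eq_abs, abs_of_nonneg hs0]
        calc s * ‖A + u • B‖ ≤ 1 * ‖A + u • B‖ := by
              gcongr
          _ = ‖A + u • B‖ := one_mul _
          _ ≤ ‖A‖ + ‖u • B‖ := norm_add_le _ _
          _ ≤ ‖A‖ + ‖B‖ := by
              rw [norm_smul]
              gcongr
              nlinarith [norm_nonneg B, norm_nonneg u]
      have e2 : ‖NormedSpace.exp ((1 - s) • A)‖ ≤ Real.exp ‖A‖ := by
        refine (duhamel_norm_exp_le _).trans (Real.exp_le_exp.mpr ?_)
        rw [norm_smul, Real.norm_eq_abs, abs_of_nonneg (by linarith)]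
        nlinarith [norm_nonneg A]
      calc ‖NormedSpace.exp (s • (A + u • B)) * B * NormedSpace.exp ((1 - s) • A)‖
          ≤ ‖NormedSpace.exp (s • (A + u • B)) * B‖ * ‖NormedSpace.exp ((1 - s) • A)‖ :=
            norm_mul_le _ _
        _ ≤ (‖NormedSpace.exp (s • (A + u • B))‖ * ‖B‖) * ‖NormedSpace.exp ((1 - s) • A)‖ := by
            gcongr; exact norm_mul_le _ _
        _ ≤ Real.exp (‖A‖ + ‖B‖) * ‖B‖ * Real.exp ‖A‖ := by gcongr
    · exact intervalIntegrable_const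
    · filter_upwards with s hs
      apply Continuous.continuousAt
      exact ((NormedSpace.exp_continuous.comp
        ((continuous_const.add (continuous_id.smul continuous_const)).const_smul s)).mul
        continuous_const).mul continuous_const
  -- Step 3: conclude
  have hI0 : I 0 = ∫ s in (0 : ℝ)..1,
      NormedSpace.exp (s • A) * B * NormedSpace.exp ((1 - s) • A) := by
    rw [hIdef, hexp]
    simp
  rw [← hI0]
  refine hasDerivAt_iff_tendsto_slope.mpr ?_
  have hslope : ∀ u : 𝕂, u ≠ 0 →
      slope (fun u : 𝕂 => NormedSpace.exp (A + u • B)) 0 u = I u := by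
    intro u hu
    rw [slope_def_module, sub_zero, hexp]
    simp only [zero_smul, add_zero]
    rw [key u, smul_smul, inv_mul_cancel₀ hu, one_smul]
  refine ((hcont.tendsto).mono_left nhdsWithin_le_nhds).congr' ?_
  filter_upwards [self_mem_nhdsWithin] with u hu
  exact (hslope u hu).symm
end
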